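/- Harmonic mean superadditivity under congruence: for positive definite self-adjoint transformations $X,Y$ on $\mathbb{R}^m$ and any linear map $S:\mathbb{R}^n\to\mathbb{R}^m$, writing $X:Y=(X^{-1}+Y^{-1})^{-1}$, one has $S^*(X:Y)S \le (S^*XS):(S^*YS)$ whenever $S^*XS$ and $S^*YS$ are positive definite. -/

import Mathlib

open Matrix

private lemma pd_mul_inv {m : ℕ} {A : Matrix (Fin m) (Fin m) ℝ} (hA : A.PosDef) :
    A * A⁻¹ = 1 := mul_nonsing_inv A hA.det_pos.ne'.isUnit

/-- `2 a⬝ᵥw - w⬝ᵥX⁻¹w ≤ a⬝ᵥXa` for PosDef `X`. -/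
private lemma quad_lb {m : ℕ} {X : Matrix (Fin m) (Fin m) ℝ} (hX : X.PosDef)
    (a w : Fin m → ℝ) :
    2 * (a ⬝ᵥ w) - w ⬝ᵥ (X⁻¹ *ᵥ w) ≤ a ⬝ᵥ (X *ᵥ a) := by
  have hXT : Xᵀ = X := hX.isHermitian
  have h0 : 0 ≤ (a - X⁻¹ *ᵥ w) ⬝ᵥ (X *ᵥ (a - X⁻¹ *ᵥ w)) := by
    simpa using hX.posSemidef.dotProduct_mulVec_nonneg (a - X⁻¹ *ᵥ w)
  have h1 : X *ᵥ (a - X⁻¹ *ᵥ w) = X *ᵥ a - w := by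
    rw [mulVec_sub, mulVec_mulVec, pd_mul_inv hX, one_mulVec]
  rw [h1, sub_dotProduct, dotProduct_sub, dotProduct_sub] at h0
  have h2 : (X⁻¹ *ᵥ w) ⬝ᵥ (X *ᵥ a) = a ⬝ᵥ w := by
    have hv : (X⁻¹ *ᵥ w) ᵥ* X = w := by
      rw [← mulVec_transpose, hXT, mulVec_mulVec, pd_mul_inv hX, one_mulVec]
    rw [dotProduct_mulVec, hv, dotProduct_comm]
  have h3 : (X⁻¹ *ᵥ w) ⬝ᵥ w = w ⬝ᵥ (X⁻¹ *ᵥ w) := dotProduct_comm _ _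
  linarith

/-- Key variational inequality for the harmonic mean. -/
private lemma key {m : ℕ} {X Y : Matrix (Fin m) (Fin m) ℝ}
    (hX : X.PosDef) (hY : Y.PosDef) (a b : Fin m → ℝ) :
    (a + b) ⬝ᵥ ((X⁻¹ + Y⁻¹)⁻¹ *ᵥ (a + b)) ≤ a ⬝ᵥ (X *ᵥ a) + b ⬝ᵥ (Y *ᵥ b) := by
  have hS : (X⁻¹ + Y⁻¹).PosDef := hX.inv.add hY.inv
  set w := (X⁻¹ + Y⁻¹)⁻¹ *ᵥ (a + b) with hw
  have hsplit : X⁻¹ *ᵥ w + Y⁻¹ *ᵥ w = a + b := by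
    have : (X⁻¹ + Y⁻¹) *ᵥ w = a + b := by
      rw [hw, mulVec_mulVec, pd_mul_inv hS, one_mulVec]
    rwa [add_mulVec] at this
  have hqs : (a + b) ⬝ᵥ w = w ⬝ᵥ (X⁻¹ *ᵥ w) + w ⬝ᵥ (Y⁻¹ *ᵥ w) := by
    rw [← hsplit, add_dotProduct, dotProduct_comm (X⁻¹ *ᵥ w) w,
      dotProduct_comm (Y⁻¹ *ᵥ w) w]
  have hA := quad_lb hX a w
  have hB := quad_lb hY b w
  have hsum : (a + b) ⬝ᵥ w = a ⬝ᵥ w + b ⬝ᵥ w := add_dotProduct a b w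
  linarith

/-- Harmonic mean superadditivity under congruence. -/
private lemma cong_dot {m n : ℕ} (M : Matrix (Fin m) (Fin m) ℝ)
    (S : Matrix (Fin m) (Fin n) ℝ) (v : Fin n → ℝ) :
    v ⬝ᵥ ((Sᵀ * M * S) *ᵥ v) = (S *ᵥ v) ⬝ᵥ (M *ᵥ (S *ᵥ v)) := by
  rw [← mulVec_mulVec, ← mulVec_mulVec, dotProduct_mulVec v Sᵀ, vecMul_transpose]

/-- Harmonic mean superadditivity under congruence. -/
theorem stmt9 (n m : ℕ) (X Y : Matrix (Fin m) (Fin m) ℝ)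
    (hX : X.PosDef) (hY : Y.PosDef)
    (S : Matrix (Fin m) (Fin n) ℝ)
    (hXS : (Sᵀ * X * S).PosDef) (hYS : (Sᵀ * Y * S).PosDef) :
    (((Sᵀ * X * S)⁻¹ + (Sᵀ * Y * S)⁻¹)⁻¹ - Sᵀ * (X⁻¹ + Y⁻¹)⁻¹ * S).PosSemidef := by
  set A := Sᵀ * X * S with hAdef
  set B := Sᵀ * Y * S with hBdef
  set H := (X⁻¹ + Y⁻¹)⁻¹ with hHdef
  have hKpd : ((A⁻¹ + B⁻¹)⁻¹).PosDef := (hXS.inv.add hYS.inv).inv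
  have hHpd : H.PosDef := (hX.inv.add hY.inv).inv
  have hHT : Hᵀ = H := hHpd.isHermitian
  refine posSemidef_iff_dotProduct_mulVec.mpr ⟨?_, ?_⟩
  · -- Hermitian part
    have hconj : (Sᵀ * H * S).IsHermitian := by
      show (Sᵀ * H * S)ᵀ = Sᵀ * H * S
      rw [transpose_mul, transpose_mul, transpose_transpose, hHT, Matrix.mul_assoc]
    exact hKpd.isHermitian.sub hconj
  · intro x
    have hstar : star x = x := by simp
    rw [hstar, sub_mulVec, dotProduct_sub, sub_nonneg]
    set w := (A⁻¹ + B⁻¹)⁻¹ *ᵥ x with hw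
    set a := A⁻¹ *ᵥ w with ha
    set b := B⁻¹ *ᵥ w with hb
    have hab : a + b = x := by
      have : (A⁻¹ + B⁻¹) *ᵥ w = x := by
        rw [hw, mulVec_mulVec, pd_mul_inv (hXS.inv.add hYS.inv), one_mulVec]
      rwa [add_mulVec] at this
    have hAa0 : A *ᵥ a = w := by
      rw [ha, mulVec_mulVec, pd_mul_inv hXS, one_mulVec]
    have hBb0 : B *ᵥ b = w := by
      rw [hb, mulVec_mulVec, pd_mul_inv hYS, one_mulVec]
    have hAa : a ⬝ᵥ (A *ᵥ a) = a ⬝ᵥ w := by rw [hAa0]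
    have hBb : b ⬝ᵥ (B *ᵥ b) = b ⬝ᵥ w := by rw [hBb0]
    have hKx : x ⬝ᵥ ((A⁻¹ + B⁻¹)⁻¹ *ᵥ x) = a ⬝ᵥ (A *ᵥ a) + b ⬝ᵥ (B *ᵥ b) := by
      rw [hAa, hBb, ← hw, ← add_dotProduct, hab]
    have hcA : a ⬝ᵥ (A *ᵥ a) = (S *ᵥ a) ⬝ᵥ (X *ᵥ (S *ᵥ a)) := cong_dot X S a
    have hcB : b ⬝ᵥ (B *ᵥ b) = (S *ᵥ b) ⬝ᵥ (Y *ᵥ (S *ᵥ b)) := cong_dot Y S b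
    have hkey := key hX hY (S *ᵥ a) (S *ᵥ b)
    have hSx : S *ᵥ a + S *ᵥ b = S *ᵥ x := by rw [← mulVec_add, hab]
    rw [hSx, ← hHdef] at hkey
    have hlhs : x ⬝ᵥ ((Sᵀ * H * S) *ᵥ x) = (S *ᵥ x) ⬝ᵥ (H *ᵥ (S *ᵥ x)) := cong_dot H S x
    rw [hlhs, hKx, hcA, hcB]
    exact hkey
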